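/- Let O be an open subset of ℝ^d, and let f₁ and f₂ be real-valued locally weakly convex functions on O. Let g₁ and g₂ be selections of the Fréchet subdifferentials ∂f₁ and ∂f₂ on O, i.e. g₁(x) ∈ ∂f₁(x) and g₂(x) ∈ ∂f₂(x) for all x ∈ O. Then sup_{x ∈ O} H(∂f₁(x), ∂f₂(x)) ≤ sup_{x ∈ O} ‖g₁(x) − g₂(x)‖. -/

import Mathlib

open MeasureTheory Metric Set Filter
open scoped InnerProductSpace ENNReal NNReal Topology Pointwise

noncomputable section

variable {E : Type*} [NormedAddCommGroup E] [InnerProductSpace ℝ E]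

/-- The Fréchet subdifferential of a real-valued function `f` at `x`:
`∂f(x) = {g : f(y) ≥ f(x) + ⟨g, y - x⟩ + o(‖y - x‖) as y → x}`. -/
def fsubdiff (f : E → ℝ) (x : E) : Set E :=
  {g | ∀ ε > 0, ∀ᶠ y in nhds x, f x + ⟪g, y - x⟫_ℝ - ε * ‖y - x‖ ≤ f y}

/-- `f` is locally weakly convex on `O`: near every `x ∈ O` there is `λ < ∞` so that
`y ↦ f(y) + (λ/2)‖y‖²` is convex on a small ball around `x`. -/
def LocWeaklyConvexOn (f : E → ℝ) (O : Set E) : Prop :=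
  ∀ x ∈ O, ∃ lam : ℝ, ∃ ε > 0, ConvexOn ℝ (ball x ε) (fun y => f y + lam / 2 * ‖y‖ ^ 2)

theorem convexOn_const_half_norm_sq {s : Set E} (hs : Convex ℝ s) {c : ℝ} (hc : 0 ≤ c) :
    ConvexOn ℝ s (fun y => c / 2 * ‖y‖ ^ 2) := by
  refine ⟨hs, fun x hx y hy a b ha hb hab => ?_⟩
  have h1 : ‖a • x + b • y‖ ≤ a * ‖x‖ + b * ‖y‖ := by
    calc ‖a • x + b • y‖ ≤ ‖a • x‖ + ‖b • y‖ := norm_add_le _ _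
    _ = a * ‖x‖ + b * ‖y‖ := by rw [norm_smul, norm_smul, Real.norm_of_nonneg ha, Real.norm_of_nonneg hb]
  have h2 : ‖a • x + b • y‖ ^ 2 ≤ a * ‖x‖ ^ 2 + b * ‖y‖ ^ 2 := by
    nlinarith [norm_nonneg (a • x + b • y), norm_nonneg x, norm_nonneg y, sq_nonneg (‖x‖ - ‖y‖), mul_nonneg ha hb, mul_nonneg (mul_nonneg ha hb) (sq_nonneg (‖x‖ - ‖y‖))]
  simp only [smul_eq_mul]
  nlinarith [h2]

theorem norm_sq_expand (p w : E) (lam : ℝ) :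
    lam / 2 * ‖w‖ ^ 2 = lam / 2 * ‖p‖ ^ 2 + lam * ⟪p, w - p⟫_ℝ + lam / 2 * ‖w - p‖ ^ 2 := by
  have : ‖w‖ ^ 2 = ‖p + (w - p)‖ ^ 2 := by rw [add_sub_cancel]
  rw [this, norm_add_sq_real]; ring

/-- Lemma A: a Fréchet subgradient of a weakly convex function gives a global
subgradient inequality for the convexified function on the ball. -/
theorem subgrad_ineq {f : E → ℝ} {x₀ : E} {ε lam : ℝ}
    (hconv : ConvexOn ℝ (ball x₀ ε) (fun y => f y + lam / 2 * ‖y‖ ^ 2))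
    {p : E} (hp : p ∈ ball x₀ ε) {g : E} (hg : g ∈ fsubdiff f p) :
    ∀ y ∈ ball x₀ ε,
      (f p + lam / 2 * ‖p‖ ^ 2) + ⟪g + lam • p, y - p⟫_ℝ ≤ f y + lam / 2 * ‖y‖ ^ 2 := by
  set h : E → ℝ := fun y => f y + lam / 2 * ‖y‖ ^ 2 with hh
  have key : ∀ δ > 0, ∀ᶠ w in 𝓝 p, h p + ⟪g + lam • p, w - p⟫_ℝ - 2 * δ * ‖w - p‖ ≤ h w := by
    intro δ hδ
    have h1 := hg δ hδ
    have h2 : ∀ᶠ w in 𝓝 p, w ∈ ball p (2 * δ / (|lam| + 1)) :=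
      ball_mem_nhds p (by positivity)
    filter_upwards [h1, h2] with w hw1 hw2
    have hlt : ‖w - p‖ < 2 * δ / (|lam| + 1) := by
      rwa [mem_ball, dist_eq_norm] at hw2
    have hb : lam / 2 * ‖w - p‖ ^ 2 ≥ -(δ * ‖w - p‖) := by
      have h3 : |lam| / 2 * ‖w - p‖ ≤ δ := by
        rw [lt_div_iff₀ (by positivity)] at hlt
        nlinarith [abs_nonneg lam, norm_nonneg (w - p)]
      have h4 : |lam / 2 * ‖w - p‖ ^ 2| ≤ δ * ‖w - p‖ := by
        rw [abs_mul, abs_div, abs_of_nonneg (by positivity : (0:ℝ) ≤ ‖w - p‖ ^ 2), abs_two]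
        calc |lam| / 2 * ‖w - p‖ ^ 2 = (|lam| / 2 * ‖w - p‖) * ‖w - p‖ := by ring
        _ ≤ δ * ‖w - p‖ := by
            exact mul_le_mul_of_nonneg_right h3 (norm_nonneg _)
      linarith [neg_abs_le (lam / 2 * ‖w - p‖ ^ 2)]
    have hin : ⟪g + lam • p, w - p⟫_ℝ = ⟪g, w - p⟫_ℝ + lam * ⟪p, w - p⟫_ℝ := by
      rw [inner_add_left, real_inner_smul_left]
    have hex := norm_sq_expand p w lam
    simp only [hh]
    rw [hin]
    linarith [hw1]
  intro y hy
  set G := g + lam • p with hG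
  have main : ∀ δ > 0, h p + ⟪G, y - p⟫_ℝ - 2 * δ * ‖y - p‖ ≤ h y := by
    intro δ hδ
    obtain ⟨U, hU, hUs⟩ := (key δ hδ).exists_mem
    have hcont : Tendsto (fun t : ℝ => p + t • (y - p)) (𝓝[>] 0) (𝓝 p) := by
      have hc : Continuous (fun t : ℝ => p + t • (y - p)) := by continuity
      have := hc.tendsto 0
      simp only [zero_smul, add_zero] at this
      exact this.mono_left nhdsWithin_le_nhds
    have hev : ∀ᶠ t : ℝ in 𝓝[>] 0, p + t • (y - p) ∈ U := hcont hU
    have hev2 : ∀ᶠ t : ℝ in 𝓝[>] 0, t < 1 := by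
      apply eventually_nhdsWithin_of_eventually_nhds
      exact Filter.Tendsto.eventually_lt_const one_pos tendsto_id
    have hev3 : ∀ᶠ t : ℝ in 𝓝[>] 0, 0 < t := eventually_mem_nhdsWithin.mono (fun t ht => ht)
    obtain ⟨t, htU, ht1, ht0⟩ := (hev.and (hev2.and hev3)).exists
    have hw := hUs _ htU
    have hwp : (p + t • (y - p)) - p = t • (y - p) := add_sub_cancel_left p _
    rw [hwp, real_inner_smul_right, norm_smul, Real.norm_of_nonneg ht0.le] at hw
    have hcomb : h (p + t • (y - p)) ≤ (1 - t) * h p + t * h y := by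
      have heq : p + t • (y - p) = (1 - t) • p + t • y := by module
      have := hconv.2 hp hy (by linarith : (0:ℝ) ≤ 1 - t) ht0.le (by ring)
      simp only [smul_eq_mul] at this
      rw [heq]; exact this
    have hstep : t * (⟪G, y - p⟫_ℝ - 2 * δ * ‖y - p‖) ≤ t * (h y - h p) := by nlinarith
    have := (mul_le_mul_iff_right₀ ht0).mp hstep
    linarith
  have goal2 : h p + ⟪G, y - p⟫_ℝ ≤ h y := by
    clear_value h G
    refine le_of_forall_pos_le_add (fun η hη => ?_)
    have hδ : (0:ℝ) < η / (2 * (‖y - p‖ + 1)) := by positivity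
    have := main _ hδ
    have hb : 2 * (η / (2 * (‖y - p‖ + 1))) * ‖y - p‖ ≤ η := by
      have h1 : (0:ℝ) < 2 * (‖y - p‖ + 1) := by positivity
      have h2 : 2 * (η / (2 * (‖y - p‖ + 1))) * ‖y - p‖ = (2 * η * ‖y - p‖) / (2 * (‖y - p‖ + 1)) := by
        field_simp
      rw [h2, div_le_iff₀ h1]
      nlinarith [norm_nonneg (y - p)]
    linarith
  exact goal2

/-- Lemma B: a global subgradient inequality on a ball gives a Fréchet subgradient. -/
theorem mem_fsubdiff_of_subgrad {f : E → ℝ} {x₀ : E} {ε lam : ℝ} {p : E} {s : E}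
    (hε : 0 < ε) (hp : p ∈ ball x₀ ε)
    (hs : ∀ y ∈ ball x₀ ε,
      (f p + lam / 2 * ‖p‖ ^ 2) + ⟪s, y - p⟫_ℝ ≤ f y + lam / 2 * ‖y‖ ^ 2) :
    s - lam • p ∈ fsubdiff f p := by
  intro δ hδ
  have h1 : ∀ᶠ y in 𝓝 p, y ∈ ball x₀ ε := (isOpen_ball.eventually_mem hp)
  have h2 : ∀ᶠ y in 𝓝 p, y ∈ ball p (2 * δ / (|lam| + 1)) := ball_mem_nhds p (by positivity)
  filter_upwards [h1, h2] with y hy1 hy2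
  have hlt : ‖y - p‖ < 2 * δ / (|lam| + 1) := by rwa [mem_ball, dist_eq_norm] at hy2
  have hbound : |lam| / 2 * ‖y - p‖ ^ 2 ≤ δ * ‖y - p‖ := by
    rw [lt_div_iff₀ (by positivity)] at hlt
    have : |lam| / 2 * ‖y - p‖ ≤ δ := by nlinarith [abs_nonneg lam, norm_nonneg (y - p)]
    calc |lam| / 2 * ‖y - p‖ ^ 2 = (|lam| / 2 * ‖y - p‖) * ‖y - p‖ := by ring
    _ ≤ δ * ‖y - p‖ := mul_le_mul_of_nonneg_right this (norm_nonneg _)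
  have hs' := hs y hy1
  have hin : ⟪s - lam • p, y - p⟫_ℝ = ⟪s, y - p⟫_ℝ - lam * ⟪p, y - p⟫_ℝ := by
    rw [inner_sub_left, real_inner_smul_left]
  have hex := norm_sq_expand p y lam
  have habs : lam / 2 * ‖y - p‖ ^ 2 ≤ |lam| / 2 * ‖y - p‖ ^ 2 := by
    have := le_abs_self lam
    nlinarith [sq_nonneg ‖y - p‖]
  rw [hin]
  linarith

/-- Lemma C: two functions with subgradient selections at distance ≤ M on a ball have
difference that varies by at most M times the distance. -/
theorem diff_le_of_subgrad_close {x₀ : E} {ε : ℝ} {h₁ h₂ : E → ℝ} {s₁ s₂ : E → E} {M : ℝ}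
    (hs₁ : ∀ p ∈ ball x₀ ε, ∀ w ∈ ball x₀ ε, h₁ p + ⟪s₁ p, w - p⟫_ℝ ≤ h₁ w)
    (hs₂ : ∀ p ∈ ball x₀ ε, ∀ w ∈ ball x₀ ε, h₂ p + ⟪s₂ p, w - p⟫_ℝ ≤ h₂ w)
    (hM : ∀ p ∈ ball x₀ ε, ‖s₂ p - s₁ p‖ ≤ M)
    {y z : E} (hy : y ∈ ball x₀ ε) (hz : z ∈ ball x₀ ε) :
    (h₂ z - h₁ z) - (h₂ y - h₁ y) ≤ M * ‖z - y‖ := by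
  have hcb : Convex ℝ (ball x₀ ε) := convex_ball x₀ ε
  have key : ∀ N : ℕ, 0 < N →
      (h₂ z - h₁ z) - (h₂ y - h₁ y)
        ≤ M * ‖z - y‖ + (⟪s₁ z, z - y⟫_ℝ - ⟪s₁ y, z - y⟫_ℝ) / N := by
    intro N hN
    have hNR : (0:ℝ) < N := by exact_mod_cast hN
    have memP : ∀ i : ℕ, i ≤ N → y + ((i:ℝ)/N) • (z - y) ∈ ball x₀ ε := by
      intro i hi
      have h0 : (0:ℝ) ≤ (i:ℝ)/N := by positivity
      have h1 : (i:ℝ)/N ≤ 1 := by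
        rw [div_le_one hNR]; exact_mod_cast hi
      have heq : y + ((i:ℝ)/N) • (z - y) = (1 - (i:ℝ)/N) • y + ((i:ℝ)/N) • z := by module
      rw [heq]
      exact hcb hy hz (by linarith) h0 (by ring)
    have hstep : ∀ i ∈ Finset.range N,
        ((fun j : ℕ => h₂ (y + ((j:ℝ)/N) • (z - y)) - h₁ (y + ((j:ℝ)/N) • (z - y))) (i+1)
          - (fun j : ℕ => h₂ (y + ((j:ℝ)/N) • (z - y)) - h₁ (y + ((j:ℝ)/N) • (z - y))) i)
        ≤ M * ‖z - y‖ / N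
          + ((fun j : ℕ => ⟪s₁ (y + ((j:ℝ)/N) • (z - y)), z - y⟫_ℝ / N) (i+1)
            - (fun j : ℕ => ⟪s₁ (y + ((j:ℝ)/N) • (z - y)), z - y⟫_ℝ / N) i) := by
      intro i hi
      simp only
      rw [Finset.mem_range] at hi
      have hi1 : i + 1 ≤ N := hi
      have hmem1 : y + (((i:ℕ)+1:ℝ)/N) • (z - y) ∈ ball x₀ ε := by
        have := memP (i+1) hi1
        push_cast at this ⊢
        exact this
      have hmem0 : y + ((i:ℝ)/N) • (z - y) ∈ ball x₀ ε := memP i (le_of_lt hi)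
      -- abbreviations
      have hdiff1 : (y + (((i:ℝ)+1)/N) • (z - y)) - (y + ((i:ℝ)/N) • (z - y))
          = ((1:ℝ)/N) • (z - y) := by
        have : ((i:ℝ)+1)/N - (i:ℝ)/N = 1/N := by field_simp; ring
        rw [← this, sub_smul]; module
      have hdiff2 : (y + ((i:ℝ)/N) • (z - y)) - (y + (((i:ℝ)+1)/N) • (z - y))
          = -(((1:ℝ)/N) • (z - y)) := by rw [← neg_sub, hdiff1]
      have h2ineq := hs₂ _ hmem1 _ hmem0
      have h1ineq := hs₁ _ hmem0 _ hmem1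
      rw [hdiff2, inner_neg_right, real_inner_smul_right] at h2ineq
      rw [hdiff1, real_inner_smul_right] at h1ineq
      have hinner : ⟪s₂ (y + (((i:ℝ)+1)/N) • (z - y)) - s₁ (y + (((i:ℝ)+1)/N) • (z - y)), z - y⟫_ℝ
          ≤ M * ‖z - y‖ := by
        calc ⟪s₂ (y + (((i:ℝ)+1)/N) • (z - y)) - s₁ (y + (((i:ℝ)+1)/N) • (z - y)), z - y⟫_ℝ
            ≤ ‖s₂ (y + (((i:ℝ)+1)/N) • (z - y)) - s₁ (y + (((i:ℝ)+1)/N) • (z - y))‖ * ‖z - y‖ :=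
              real_inner_le_norm _ _
        _ ≤ M * ‖z - y‖ := mul_le_mul_of_nonneg_right (hM _ hmem1) (norm_nonneg _)
      have hsplit : (1/(N:ℝ)) * ⟪s₂ (y + (((i:ℝ)+1)/N) • (z - y)), z - y⟫_ℝ
          = ⟪s₂ (y + (((i:ℝ)+1)/N) • (z - y)) - s₁ (y + (((i:ℝ)+1)/N) • (z - y)), z - y⟫_ℝ * (1/(N:ℝ))
            + ⟪s₁ (y + (((i:ℝ)+1)/N) • (z - y)), z - y⟫_ℝ * (1/(N:ℝ)) := by
        rw [inner_sub_left]; ring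
      have hscaled := mul_le_mul_of_nonneg_right hinner (le_of_lt (by positivity : (0:ℝ) < 1/N))
      push_cast
      rw [div_eq_mul_one_div (⟪s₁ (y + (((i:ℝ)+1)/N) • (z - y)), z - y⟫_ℝ),
        div_eq_mul_one_div (⟪s₁ (y + ((i:ℝ)/N) • (z - y)), z - y⟫_ℝ),
        div_eq_mul_one_div (M * ‖z - y‖)]
      linarith [h2ineq, h1ineq, hscaled, hsplit]
    have hsum1 := Finset.sum_range_sub
      (fun j : ℕ => h₂ (y + ((j:ℝ)/N) • (z - y)) - h₁ (y + ((j:ℝ)/N) • (z - y))) N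
    have hsum2 := Finset.sum_range_sub
      (fun j : ℕ => ⟪s₁ (y + ((j:ℝ)/N) • (z - y)), z - y⟫_ℝ / N) N
    have hle := Finset.sum_le_sum hstep
    rw [hsum1] at hle
    rw [Finset.sum_add_distrib, hsum2, Finset.sum_const, Finset.card_range] at hle
    have hPN : y + ((N:ℝ)/N) • (z - y) = z := by
      rw [div_self (ne_of_gt hNR), one_smul]; abel

    have hconst : (N : ℕ) • (M * ‖z - y‖ / N) = M * ‖z - y‖ := by
      rw [nsmul_eq_mul]
      field_simp
    rw [hPN] at hle
    simp only [Nat.cast_zero, zero_div, zero_smul, add_zero] at hle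
    rw [hconst] at hle
    have : ⟪s₁ z, z - y⟫_ℝ / N - ⟪s₁ y, z - y⟫_ℝ / N
        = (⟪s₁ z, z - y⟫_ℝ - ⟪s₁ y, z - y⟫_ℝ) / N := by ring
    linarith [hle]
  refine le_of_forall_pos_le_add (fun η hη => ?_)
  obtain ⟨N, hNgt⟩ := exists_nat_gt (max 1 (|⟪s₁ z, z - y⟫_ℝ - ⟪s₁ y, z - y⟫_ℝ| / η))
  have hN1 : (1:ℝ) < N := lt_of_le_of_lt (le_max_left _ _) hNgt
  have hN0 : 0 < N := by exact_mod_cast lt_trans one_pos hN1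
  have hNR : (0:ℝ) < N := by exact_mod_cast hN0
  have := key N hN0
  have hfrac : (⟪s₁ z, z - y⟫_ℝ - ⟪s₁ y, z - y⟫_ℝ) / N ≤ η := by
    have h1 : |⟪s₁ z, z - y⟫_ℝ - ⟪s₁ y, z - y⟫_ℝ| / η < N :=
      lt_of_le_of_lt (le_max_right _ _) hNgt
    rw [div_lt_iff₀ hη] at h1
    rw [div_le_iff₀ hNR]
    nlinarith [le_abs_self (⟪s₁ z, z - y⟫_ℝ - ⟪s₁ y, z - y⟫_ℝ)]
  linarith

private noncomputable def Qaux (h : E → ℝ) (x : E) (t : ℝ) (v : E) : ℝ := (h (x + t • v) - h x) / t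

private def Saux (h : E → ℝ) (x : E) (ρ : ℝ) (v : E) : Set ℝ :=
  (fun t => Qaux h x t v) '' {t : ℝ | 0 < t ∧ t * ‖v‖ < ρ}

private noncomputable def paux (h : E → ℝ) (x : E) (ρ : ℝ) (v : E) : ℝ := sInf (Saux h x ρ v)

private theorem mem_ball_aux {x : E} {ρ : ℝ} {t : ℝ} {v : E} (ht : 0 < t) (htρ : t * ‖v‖ < ρ) :
    x + t • v ∈ ball x ρ := by
  rw [mem_ball, dist_eq_norm, add_sub_cancel_left, norm_smul, Real.norm_of_nonneg ht.le]
  exact htρ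

private theorem Qaux_mono {h : E → ℝ} {x : E} {ρ : ℝ} (hρ : 0 < ρ)
    (hconv : ConvexOn ℝ (ball x ρ) h) {t t' : ℝ} {v : E}
    (ht : 0 < t) (htt : t ≤ t') (ht' : t' * ‖v‖ < ρ) : Qaux h x t v ≤ Qaux h x t' v := by
  rcases eq_or_lt_of_le htt with rfl | hlt
  · exact le_refl _
  have ht'0 : 0 < t' := lt_trans ht hlt
  have hx : x ∈ ball x ρ := mem_ball_self hρ
  have hy : x + t' • v ∈ ball x ρ := mem_ball_aux ht'0 ht'
  have hab : (0:ℝ) ≤ 1 - t / t' := by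
    rw [sub_nonneg, div_le_one ht'0]; exact htt
  have hb : (0:ℝ) ≤ t / t' := by positivity
  have hcomb := hconv.2 hx hy hab hb (by ring)
  have heq : (1 - t / t') • x + (t / t') • (x + t' • v) = x + t • v := by
    have h1 : (t / t') • (t' • v) = t • v := by
      rw [smul_smul, div_mul_cancel₀ _ (ne_of_gt ht'0)]
    rw [smul_add, h1]; module
  rw [heq] at hcomb
  simp only [smul_eq_mul] at hcomb
  unfold Qaux
  rw [div_le_div_iff₀ ht ht'0]
  have hmul := mul_le_mul_of_nonneg_right hcomb (le_of_lt ht'0)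
  have hclear : ((1 - t / t') * h x + t / t' * h (x + t' • v)) * t'
      = t' * h x - t * h x + t * h (x + t' • v) := by
    field_simp
  rw [hclear] at hmul
  nlinarith [hmul]

private theorem Saux_nonempty {h : E → ℝ} {x : E} {ρ : ℝ} (hρ : 0 < ρ) (v : E) :
    (Saux h x ρ v).Nonempty := by
  refine ⟨Qaux h x (ρ / (2 * (‖v‖ + 1))) v, ⟨ρ / (2 * (‖v‖ + 1)), ⟨by positivity, ?_⟩, rfl⟩⟩
  rw [div_mul_eq_mul_div, div_lt_iff₀ (by positivity)]
  nlinarith [norm_nonneg v]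

private theorem Saux_lb {h : E → ℝ} {x : E} {ρ : ℝ} {s : E} {M : ℝ}
    (hlow : ∀ y ∈ ball x ρ, h x + ⟪s, y - x⟫_ℝ - M * ‖y - x‖ ≤ h y) (v : E) :
    ∀ a ∈ Saux h x ρ v, ⟪s, v⟫_ℝ - M * ‖v‖ ≤ a := by
  rintro a ⟨t, ⟨ht, htρ⟩, rfl⟩
  simp only
  have hmem := mem_ball_aux (x := x) ht htρ
  have := hlow _ hmem
  rw [add_sub_cancel_left, real_inner_smul_right, norm_smul, Real.norm_of_nonneg ht.le] at this
  unfold Qaux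
  rw [le_div_iff₀ ht]
  nlinarith [this]

private theorem paux_lb {h : E → ℝ} {x : E} {ρ : ℝ} {s : E} {M : ℝ} (hρ : 0 < ρ)
    (hlow : ∀ y ∈ ball x ρ, h x + ⟪s, y - x⟫_ℝ - M * ‖y - x‖ ≤ h y) (v : E) :
    ⟪s, v⟫_ℝ - M * ‖v‖ ≤ paux h x ρ v :=
  le_csInf (Saux_nonempty hρ v) (Saux_lb hlow v)

private theorem paux_le {h : E → ℝ} {x : E} {ρ : ℝ} {s : E} {M : ℝ}
    (hlow : ∀ y ∈ ball x ρ, h x + ⟪s, y - x⟫_ℝ - M * ‖y - x‖ ≤ h y) {t : ℝ} {v : E}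
    (ht : 0 < t) (htρ : t * ‖v‖ < ρ) : paux h x ρ v ≤ Qaux h x t v :=
  csInf_le ⟨⟪s, v⟫_ℝ - M * ‖v‖, Saux_lb hlow v⟩ ⟨t, ⟨ht, htρ⟩, rfl⟩

private theorem paux_smul {h : E → ℝ} {x : E} {ρ : ℝ} {c : ℝ} (hc : 0 < c) (v : E) :
    paux h x ρ (c • v) = c * paux h x ρ v := by
  have hset : Saux h x ρ (c • v) = c • Saux h x ρ v := by
    ext a
    constructor
    · rintro ⟨t, ⟨ht, htρ⟩, rfl⟩
      rw [norm_smul, Real.norm_of_nonneg hc.le] at htρ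
      refine ⟨Qaux h x (t * c) v, ⟨t * c, ⟨by positivity, by nlinarith⟩, rfl⟩, ?_⟩
      simp only [smul_eq_mul]
      unfold Qaux
      rw [smul_smul] at *
      field_simp
    · rintro ⟨b, ⟨t, ⟨ht, htρ⟩, rfl⟩, rfl⟩
      refine ⟨t / c, ⟨by positivity, ?_⟩, ?_⟩
      · rw [norm_smul, Real.norm_of_nonneg hc.le]
        calc t / c * (c * ‖v‖) = t * ‖v‖ := by field_simp
        _ < ρ := htρ
      · simp only [smul_eq_mul]
        unfold Qaux
        rw [smul_smul, div_mul_cancel₀ _ (ne_of_gt hc)]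
        field_simp
  rw [paux, paux, hset, Real.sInf_smul_of_nonneg hc.le, smul_eq_mul]

private theorem paux_add {h : E → ℝ} {x : E} {ρ : ℝ} {s : E} {M : ℝ} (hρ : 0 < ρ)
    (hconv : ConvexOn ℝ (ball x ρ) h)
    (hlow : ∀ y ∈ ball x ρ, h x + ⟪s, y - x⟫_ℝ - M * ‖y - x‖ ≤ h y) (v w : E) :
    paux h x ρ (v + w) ≤ paux h x ρ v + paux h x ρ w := by
  refine le_of_forall_pos_le_add (fun η hη => ?_)
  have hη2 : 0 < η / 2 := by positivity
  obtain ⟨a₁, ⟨t₁, ⟨ht₁, ht₁ρ⟩, rfl⟩, ha₁⟩ :=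
    exists_lt_of_csInf_lt (Saux_nonempty hρ v) (lt_add_of_pos_right (paux h x ρ v) hη2)
  obtain ⟨a₂, ⟨t₂, ⟨ht₂, ht₂ρ⟩, rfl⟩, ha₂⟩ :=
    exists_lt_of_csInf_lt (Saux_nonempty hρ w) (lt_add_of_pos_right (paux h x ρ w) hη2)
  simp only at ha₁ ha₂
  set σ := min t₁ t₂ / 2 with hσdef
  have hσ : 0 < σ := by positivity
  have h2σt₁ : 2 * σ ≤ t₁ := by
    rw [hσdef]; have := min_le_left t₁ t₂; linarith
  have h2σt₂ : 2 * σ ≤ t₂ := by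
    rw [hσdef]; have := min_le_right t₁ t₂; linarith
  have h2σv : (2 * σ) * ‖v‖ < ρ :=
    lt_of_le_of_lt (mul_le_mul_of_nonneg_right h2σt₁ (norm_nonneg v)) ht₁ρ
  have h2σw : (2 * σ) * ‖w‖ < ρ :=
    lt_of_le_of_lt (mul_le_mul_of_nonneg_right h2σt₂ (norm_nonneg w)) ht₂ρ
  have hσvw : σ * ‖v + w‖ < ρ := by
    have := norm_add_le v w
    nlinarith [norm_nonneg v, norm_nonneg w]
  have hmid : Qaux h x σ (v + w) ≤ Qaux h x (2 * σ) v + Qaux h x (2 * σ) w := by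
    have hm1 : x + (2 * σ) • v ∈ ball x ρ := mem_ball_aux (by positivity) h2σv
    have hm2 : x + (2 * σ) • w ∈ ball x ρ := mem_ball_aux (by positivity) h2σw
    have hcomb := hconv.2 hm1 hm2 (by norm_num : (0:ℝ) ≤ 1/2) (by norm_num : (0:ℝ) ≤ 1/2)
      (by norm_num)
    have heq : (1/2 : ℝ) • (x + (2 * σ) • v) + (1/2 : ℝ) • (x + (2 * σ) • w)
        = x + σ • (v + w) := by module
    rw [heq] at hcomb
    simp only [smul_eq_mul] at hcomb
    unfold Qaux
    have hσ2 : (0:ℝ) < 2 * σ := by positivity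
    rw [div_add_div _ _ (ne_of_gt hσ2) (ne_of_gt hσ2), div_le_div_iff₀ hσ (by positivity)]
    nlinarith [hcomb]
  calc paux h x ρ (v + w) ≤ Qaux h x σ (v + w) := paux_le hlow hσ hσvw
  _ ≤ Qaux h x (2 * σ) v + Qaux h x (2 * σ) w := hmid
  _ ≤ Qaux h x t₁ v + Qaux h x t₂ w := by
      gcongr <;> [exact Qaux_mono hρ hconv (by positivity) h2σt₁ ht₁ρ;
        exact Qaux_mono hρ hconv (by positivity) h2σt₂ ht₂ρ]
  _ ≤ paux h x ρ v + η / 2 + (paux h x ρ w + η / 2) := by linarith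
  _ = paux h x ρ v + paux h x ρ w + η := by ring

private noncomputable def raux (h : E → ℝ) (x : E) (ρ : ℝ) (s : E) (M : ℝ) (v : E) : ℝ :=
  sInf (Set.range fun w => paux h x ρ w + (⟪s, v - w⟫_ℝ + M * ‖v - w‖))

section raux
variable {h : E → ℝ} {x : E} {ρ : ℝ} {s : E} {M : ℝ}

private theorem raux_lb (hρ : 0 < ρ) (hM : 0 ≤ M)
    (hlow : ∀ y ∈ ball x ρ, h x + ⟪s, y - x⟫_ℝ - M * ‖y - x‖ ≤ h y) (v : E) :
    ∀ a ∈ Set.range (fun w => paux h x ρ w + (⟪s, v - w⟫_ℝ + M * ‖v - w‖)),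
      ⟪s, v⟫_ℝ - M * ‖v‖ ≤ a := by
  rintro a ⟨w, rfl⟩
  simp only
  have h1 := paux_lb hρ hlow w
  have h2 : ⟪s, v - w⟫_ℝ = ⟪s, v⟫_ℝ - ⟪s, w⟫_ℝ := inner_sub_right s v w
  have h3 : ‖w‖ ≤ ‖v‖ + ‖v - w‖ := by
    calc ‖w‖ = ‖v - (v - w)‖ := by rw [sub_sub_cancel]
    _ ≤ ‖v‖ + ‖v - w‖ := norm_sub_le v (v - w)
  nlinarith [norm_nonneg (v - w), norm_nonneg w, norm_nonneg v,
    mul_le_mul_of_nonneg_left h3 hM]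

private theorem raux_bdd (hρ : 0 < ρ) (hM : 0 ≤ M)
    (hlow : ∀ y ∈ ball x ρ, h x + ⟪s, y - x⟫_ℝ - M * ‖y - x‖ ≤ h y) (v : E) :
    BddBelow (Set.range (fun w => paux h x ρ w + (⟪s, v - w⟫_ℝ + M * ‖v - w‖))) :=
  ⟨⟪s, v⟫_ℝ - M * ‖v‖, raux_lb hρ hM hlow v⟩

private theorem raux_lb' (hρ : 0 < ρ) (hM : 0 ≤ M)
    (hlow : ∀ y ∈ ball x ρ, h x + ⟪s, y - x⟫_ℝ - M * ‖y - x‖ ≤ h y) (v : E) :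
    ⟪s, v⟫_ℝ - M * ‖v‖ ≤ raux h x ρ s M v :=
  le_csInf (Set.range_nonempty _) (raux_lb hρ hM hlow v)

private theorem raux_le_paux (hρ : 0 < ρ) (hM : 0 ≤ M)
    (hlow : ∀ y ∈ ball x ρ, h x + ⟪s, y - x⟫_ℝ - M * ‖y - x‖ ≤ h y) (v : E) :
    raux h x ρ s M v ≤ paux h x ρ v := by
  have := csInf_le (raux_bdd hρ hM hlow v) ⟨v, rfl⟩
  simpa [raux, sub_self, inner_zero_right, norm_zero] using this

private theorem paux_zero_le (hρ : 0 < ρ)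
    (hlow : ∀ y ∈ ball x ρ, h x + ⟪s, y - x⟫_ℝ - M * ‖y - x‖ ≤ h y) :
    paux h x ρ (0 : E) ≤ 0 := by
  have h1 : (1:ℝ) * ‖(0:E)‖ < ρ := by simpa using hρ
  have := paux_le hlow one_pos h1
  simpa [Qaux] using this

private theorem raux_le_lin (hρ : 0 < ρ) (hM : 0 ≤ M)
    (hlow : ∀ y ∈ ball x ρ, h x + ⟪s, y - x⟫_ℝ - M * ‖y - x‖ ≤ h y) (v : E) :
    raux h x ρ s M v ≤ ⟪s, v⟫_ℝ + M * ‖v‖ := by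
  have h1 := csInf_le (raux_bdd hρ hM hlow v) ⟨(0 : E), rfl⟩
  simp only [sub_zero] at h1
  have h2 := paux_zero_le hρ hlow
  rw [raux]
  linarith

private theorem raux_smul (hρ : 0 < ρ) (hM : 0 ≤ M)
    (hlow : ∀ y ∈ ball x ρ, h x + ⟪s, y - x⟫_ℝ - M * ‖y - x‖ ≤ h y)
    {c : ℝ} (hc : 0 < c) (v : E) :
    raux h x ρ s M (c • v) = c * raux h x ρ s M v := by
  have hset : Set.range (fun w => paux h x ρ w + (⟪s, c • v - w⟫_ℝ + M * ‖c • v - w‖))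
      = c • Set.range (fun w => paux h x ρ w + (⟪s, v - w⟫_ℝ + M * ‖v - w‖)) := by
    ext a
    constructor
    · rintro ⟨w, rfl⟩
      refine ⟨paux h x ρ (c⁻¹ • w) + (⟪s, v - c⁻¹ • w⟫_ℝ + M * ‖v - c⁻¹ • w‖),
        ⟨c⁻¹ • w, rfl⟩, ?_⟩
      have hw : w = c • (c⁻¹ • w) := by rw [smul_smul, mul_inv_cancel₀ (ne_of_gt hc), one_smul]
      have hd : c • v - w = c • (v - c⁻¹ • w) := by
        rw [smul_sub]; rw [← hw]
      simp only [smul_eq_mul]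
      rw [hd, real_inner_smul_right, norm_smul, Real.norm_of_nonneg hc.le]
      have hpw : paux h x ρ (c • (c⁻¹ • w)) = c * paux h x ρ (c⁻¹ • w) := paux_smul hc _
      rw [← hw] at hpw
      rw [hpw]
      ring
    · rintro ⟨b, ⟨w, rfl⟩, rfl⟩
      refine ⟨c • w, ?_⟩
      have hd : c • v - c • w = c • (v - w) := by rw [smul_sub]
      simp only [smul_eq_mul]
      rw [hd, real_inner_smul_right, norm_smul, Real.norm_of_nonneg hc.le, paux_smul hc]
      ring
  rw [raux, raux, hset, Real.sInf_smul_of_nonneg hc.le, smul_eq_mul]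

private theorem raux_add (hρ : 0 < ρ) (hM : 0 ≤ M)
    (hconv : ConvexOn ℝ (ball x ρ) h)
    (hlow : ∀ y ∈ ball x ρ, h x + ⟪s, y - x⟫_ℝ - M * ‖y - x‖ ≤ h y) (v₁ v₂ : E) :
    raux h x ρ s M (v₁ + v₂) ≤ raux h x ρ s M v₁ + raux h x ρ s M v₂ := by
  refine le_of_forall_pos_le_add (fun η hη => ?_)
  have hη2 : 0 < η / 2 := by positivity
  obtain ⟨a₁, ⟨w₁, rfl⟩, ha₁⟩ := exists_lt_of_csInf_lt (Set.range_nonempty _)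
    (lt_add_of_pos_right (raux h x ρ s M v₁) hη2)
  obtain ⟨a₂, ⟨w₂, rfl⟩, ha₂⟩ := exists_lt_of_csInf_lt (Set.range_nonempty _)
    (lt_add_of_pos_right (raux h x ρ s M v₂) hη2)
  simp only at ha₁ ha₂
  have hle : raux h x ρ s M (v₁ + v₂)
      ≤ paux h x ρ (w₁ + w₂) + (⟪s, v₁ + v₂ - (w₁ + w₂)⟫_ℝ + M * ‖v₁ + v₂ - (w₁ + w₂)‖) :=
    csInf_le (raux_bdd hρ hM hlow _) ⟨w₁ + w₂, rfl⟩
  have hp := paux_add hρ hconv hlow w₁ w₂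
  have hsplit : v₁ + v₂ - (w₁ + w₂) = (v₁ - w₁) + (v₂ - w₂) := by abel
  have hinner : ⟪s, v₁ + v₂ - (w₁ + w₂)⟫_ℝ = ⟪s, v₁ - w₁⟫_ℝ + ⟪s, v₂ - w₂⟫_ℝ := by
    rw [hsplit, inner_add_right]
  have hnorm : ‖v₁ + v₂ - (w₁ + w₂)‖ ≤ ‖v₁ - w₁‖ + ‖v₂ - w₂‖ := by
    rw [hsplit]; exact norm_add_le _ _
  nlinarith [mul_le_mul_of_nonneg_left hnorm hM]

end raux

/-- Lemma D: if a convex function on a ball dominates an affine function minus `M`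
times the distance, there is a true subgradient within `M` of the slope. -/
theorem exists_close_subgrad [FiniteDimensional ℝ E]
    {x : E} {ρ : ℝ} (hρ : 0 < ρ) {h : E → ℝ} {s : E} {M : ℝ} (hM : 0 ≤ M)
    (hconv : ConvexOn ℝ (ball x ρ) h)
    (hlow : ∀ y ∈ ball x ρ, h x + ⟪s, y - x⟫_ℝ - M * ‖y - x‖ ≤ h y) :
    ∃ t : E, ‖t - s‖ ≤ M ∧ ∀ y ∈ ball x ρ, h x + ⟪t, y - x⟫_ℝ ≤ h y := by
  haveI : CompleteSpace E := FiniteDimensional.complete ℝ E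
  -- Hahn–Banach below the sublinear function `raux`
  obtain ⟨ℓ, -, hℓ⟩ := exists_extension_of_le_sublinear ⟨⊥, 0⟩ (raux h x ρ s M)
    (fun c hc v => raux_smul hρ hM hlow hc v)
    (fun v w => raux_add hρ hM hconv hlow v w)
    (by
      rintro ⟨u, hu⟩
      have hu0 : u = 0 := (Submodule.mem_bot ℝ).1 hu
      simp only [hu0, LinearPMap.mk_apply, LinearMap.zero_apply]
      have := raux_lb' hρ hM hlow (0 : E)
      simpa using this)
  set t : E := (InnerProductSpace.toDual ℝ E).symm (LinearMap.toContinuousLinearMap ℓ) with ht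
  have htv : ∀ v : E, ⟪t, v⟫_ℝ = ℓ v := by
    intro v
    rw [ht]
    exact InnerProductSpace.toDual_symm_apply
  clear_value t
  have hub : ∀ v : E, ℓ v ≤ ⟪s, v⟫_ℝ + M * ‖v‖ := fun v =>
    le_trans (hℓ v) (raux_le_lin hρ hM hlow v)
  have hlb : ∀ v : E, ⟪s, v⟫_ℝ - M * ‖v‖ ≤ ℓ v := by
    intro v
    have := hub (-v)
    rw [map_neg, inner_neg_right, norm_neg] at this
    linarith
  refine ⟨t, ?_, ?_⟩
  · have hv := hub (t - s)
    rw [← htv] at hv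
    have : ⟪t - s, t - s⟫_ℝ ≤ M * ‖t - s‖ := by
      rw [inner_sub_left]
      linarith [hv]
    rw [real_inner_self_eq_norm_sq] at this
    nlinarith [norm_nonneg (t - s)]
  · intro y hy
    have hmem : (1:ℝ) * ‖y - x‖ < ρ := by
      rw [one_mul, ← dist_eq_norm]
      exact hy
    have h1 : ℓ (y - x) ≤ paux h x ρ (y - x) := le_trans (hℓ _) (raux_le_paux hρ hM hlow _)
    have h2 : paux h x ρ (y - x) ≤ Qaux h x 1 (y - x) := paux_le hlow one_pos hmem
    have h3 : Qaux h x 1 (y - x) = h y - h x := by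
      rw [Qaux, one_smul, add_sub_cancel, div_one]
    rw [htv]
    linarith

/-- Key deviation lemma: every Fréchet subgradient of `f₁` at `x ∈ O` is within `M`
of some Fréchet subgradient of `f₂` at `x`. -/
theorem key_dev [FiniteDimensional ℝ E] {O : Set E} (hO : IsOpen O)
    {f₁ f₂ : E → ℝ} (hf₁ : LocWeaklyConvexOn f₁ O) (hf₂ : LocWeaklyConvexOn f₂ O)
    {g₁ g₂ : E → E} (hg₁ : ∀ x ∈ O, g₁ x ∈ fsubdiff f₁ x) (hg₂ : ∀ x ∈ O, g₂ x ∈ fsubdiff f₂ x)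
    {M : ℝ} (hM : 0 ≤ M) (hMb : ∀ z ∈ O, ‖g₁ z - g₂ z‖ ≤ M)
    {x : E} (hx : x ∈ O) {u : E} (hu : u ∈ fsubdiff f₁ x) :
    ∃ w ∈ fsubdiff f₂ x, ‖u - w‖ ≤ M := by
  obtain ⟨lam₁, ε₁, hε₁, hc₁⟩ := hf₁ x hx
  obtain ⟨lam₂, ε₂, hε₂, hc₂⟩ := hf₂ x hx
  obtain ⟨εO, hεO, hbO⟩ := Metric.isOpen_iff.1 hO x hx
  set ε := min ε₁ (min ε₂ εO) with hεdef
  have hε : 0 < ε := lt_min hε₁ (lt_min hε₂ hεO)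
  have hsub₁ : ball x ε ⊆ ball x ε₁ := ball_subset_ball (min_le_left _ _)
  have hsub₂ : ball x ε ⊆ ball x ε₂ :=
    ball_subset_ball (le_trans (min_le_right _ _) (min_le_left _ _))
  have hsubO : ball x ε ⊆ O :=
    Subset.trans (ball_subset_ball (le_trans (min_le_right _ _) (min_le_right _ _))) hbO
  set lam := max lam₁ lam₂ with hlamdef
  have hconv₁ : ConvexOn ℝ (ball x ε) (fun y => f₁ y + lam / 2 * ‖y‖ ^ 2) := by
    have heq : (fun y : E => f₁ y + lam / 2 * ‖y‖ ^ 2)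
        = fun y : E => (f₁ y + lam₁ / 2 * ‖y‖ ^ 2) + (lam - lam₁) / 2 * ‖y‖ ^ 2 := by
      funext y; ring
    rw [heq]
    exact (hc₁.subset hsub₁ (convex_ball x ε)).add
      (convexOn_const_half_norm_sq (convex_ball x ε) (by simp [hlamdef, sub_nonneg]))
  have hconv₂ : ConvexOn ℝ (ball x ε) (fun y => f₂ y + lam / 2 * ‖y‖ ^ 2) := by
    have heq : (fun y : E => f₂ y + lam / 2 * ‖y‖ ^ 2)
        = fun y : E => (f₂ y + lam₂ / 2 * ‖y‖ ^ 2) + (lam - lam₂) / 2 * ‖y‖ ^ 2 := by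
      funext y; ring
    rw [heq]
    exact (hc₂.subset hsub₂ (convex_ball x ε)).add
      (convexOn_const_half_norm_sq (convex_ball x ε) (by simp [hlamdef, sub_nonneg]))
  -- the subgradient selections of the convexified functions
  have hs₁ : ∀ p ∈ ball x ε, ∀ w ∈ ball x ε,
      (f₁ p + lam / 2 * ‖p‖ ^ 2) + ⟪g₁ p + lam • p, w - p⟫_ℝ ≤ f₁ w + lam / 2 * ‖w‖ ^ 2 :=
    fun p hp => subgrad_ineq hconv₁ hp (hg₁ p (hsubO hp))
  have hs₂ : ∀ p ∈ ball x ε, ∀ w ∈ ball x ε,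
      (f₂ p + lam / 2 * ‖p‖ ^ 2) + ⟪g₂ p + lam • p, w - p⟫_ℝ ≤ f₂ w + lam / 2 * ‖w‖ ^ 2 :=
    fun p hp => subgrad_ineq hconv₂ hp (hg₂ p (hsubO hp))
  have hMball : ∀ p ∈ ball x ε, ‖(g₂ p + lam • p) - (g₁ p + lam • p)‖ ≤ M := by
    intro p hp
    rw [add_sub_add_right_eq_sub, norm_sub_rev]
    exact hMb p (hsubO hp)
  -- the Lipschitz bound on the difference
  have hlip : ∀ y ∈ ball x ε, ∀ z ∈ ball x ε,
      ((f₂ z + lam / 2 * ‖z‖ ^ 2) - (f₁ z + lam / 2 * ‖z‖ ^ 2))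
        - ((f₂ y + lam / 2 * ‖y‖ ^ 2) - (f₁ y + lam / 2 * ‖y‖ ^ 2)) ≤ M * ‖z - y‖ :=
    fun y hy z hz => diff_le_of_subgrad_close hs₁ hs₂ hMball hy hz
  -- subgradient inequality for `u` at `x`
  have hux := subgrad_ineq hconv₁ (mem_ball_self hε) hu
  -- lower bound for h₂
  have hlow : ∀ y ∈ ball x ε, (f₂ x + lam / 2 * ‖x‖ ^ 2) + ⟪u + lam • x, y - x⟫_ℝ
      - M * ‖y - x‖ ≤ f₂ y + lam / 2 * ‖y‖ ^ 2 := by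
    intro y hy
    have h1 := hux y hy
    have h2 := hlip y hy x (mem_ball_self hε)
    rw [norm_sub_rev] at h2
    linarith
  obtain ⟨t, htM, htsub⟩ := exists_close_subgrad hε hM hconv₂ hlow
  refine ⟨t - lam • x, mem_fsubdiff_of_subgrad hε (mem_ball_self hε) htsub, ?_⟩
  have : u - (t - lam • x) = -(t - (u + lam • x)) := by module
  rw [this, norm_neg]
  exact htM

/-- For locally weakly convex `f₁, f₂` on an open set `O ⊆ ℝ^d`, and
selections `g₁, g₂` of the subdifferentials `∂f₁, ∂f₂` on `O`,
`sup_{x ∈ O} H(∂f₁(x), ∂f₂(x)) ≤ sup_{x ∈ O} ‖g₁(x) - g₂(x)‖`. -/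
theorem statement0
    (d : ℕ) (O : Set (EuclideanSpace ℝ (Fin d))) (hO : IsOpen O)
    (f₁ f₂ : EuclideanSpace ℝ (Fin d) → ℝ)
    (hf₁ : LocWeaklyConvexOn f₁ O) (hf₂ : LocWeaklyConvexOn f₂ O)
    (g₁ g₂ : EuclideanSpace ℝ (Fin d) → EuclideanSpace ℝ (Fin d))
    (hg₁ : ∀ x ∈ O, g₁ x ∈ fsubdiff f₁ x) (hg₂ : ∀ x ∈ O, g₂ x ∈ fsubdiff f₂ x) :
    ⨆ x ∈ O, EMetric.hausdorffEdist (fsubdiff f₁ x) (fsubdiff f₂ x)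
      ≤ ⨆ x ∈ O, ENNReal.ofReal ‖g₁ x - g₂ x‖ := by
  rcases eq_top_or_lt_top (⨆ x ∈ O, ENNReal.ofReal ‖g₁ x - g₂ x‖) with hR | hR
  · rw [hR]; exact le_top
  refine iSup₂_le (fun x hx => ?_)
  have hM : (0:ℝ) ≤ (⨆ x ∈ O, ENNReal.ofReal ‖g₁ x - g₂ x‖).toReal := ENNReal.toReal_nonneg
  have hMb : ∀ z ∈ O, ‖g₁ z - g₂ z‖ ≤ (⨆ x ∈ O, ENNReal.ofReal ‖g₁ x - g₂ x‖).toReal := by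
    intro z hz
    have h1 : ENNReal.ofReal ‖g₁ z - g₂ z‖ ≤ ⨆ x ∈ O, ENNReal.ofReal ‖g₁ x - g₂ x‖ :=
      le_iSup₂ (f := fun z (_ : z ∈ O) => ENNReal.ofReal ‖g₁ z - g₂ z‖) z hz
    exact (ENNReal.ofReal_le_iff_le_toReal hR.ne).1 h1
  have hMb' : ∀ z ∈ O, ‖g₂ z - g₁ z‖ ≤ (⨆ x ∈ O, ENNReal.ofReal ‖g₁ x - g₂ x‖).toReal := by
    intro z hz; rw [norm_sub_rev]; exact hMb z hz
  have Hdist : EMetric.hausdorffEdist (fsubdiff f₁ x) (fsubdiff f₂ x)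
      ≤ ENNReal.ofReal (⨆ x ∈ O, ENNReal.ofReal ‖g₁ x - g₂ x‖).toReal := by
    apply EMetric.hausdorffEdist_le_of_mem_edist
    · intro u hu
      obtain ⟨w, hw, hwd⟩ := key_dev hO hf₁ hf₂ hg₁ hg₂ hM hMb hx hu
      refine ⟨w, hw, ?_⟩
      rw [edist_dist]
      exact ENNReal.ofReal_le_ofReal (by rwa [dist_eq_norm])
    · intro u hu
      obtain ⟨w, hw, hwd⟩ := key_dev hO hf₂ hf₁ hg₂ hg₁ hM hMb' hx hu
      refine ⟨w, hw, ?_⟩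
      rw [edist_dist]
      exact ENNReal.ofReal_le_ofReal (by rwa [dist_eq_norm])
  calc EMetric.hausdorffEdist (fsubdiff f₁ x) (fsubdiff f₂ x)
      ≤ ENNReal.ofReal (⨆ x ∈ O, ENNReal.ofReal ‖g₁ x - g₂ x‖).toReal := Hdist
  _ = ⨆ x ∈ O, ENNReal.ofReal ‖g₁ x - g₂ x‖ := ENNReal.ofReal_toReal hR.ne
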